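/- For p ∈ (1, ∞) and q ∈ (0, 1), the derivative of E_{1,p} satisfies (d/dq) E_{1,p}(q) = (E_{1,p}(q) - K_{1,p}(q)) / q. -/

import Mathlib

open Real MeasureTheory

/-- The complete `p`-elliptic integral of the first kind. -/
noncomputable def K1 (p q : ℝ) : ℝ :=
  ∫ z in (0:ℝ)..1, (1 - q ^ 2 * z ^ 2) ^ (-(1/2) : ℝ) * (1 - z ^ 2) ^ (-(1 / p))

/-- The complete `p`-elliptic integral of the second kind. -/
noncomputable def E1 (p q : ℝ) : ℝ :=
  ∫ z in (0:ℝ)..1, (1 - q ^ 2 * z ^ 2) ^ ((1/2) : ℝ) * (1 - z ^ 2) ^ (-(1 / p))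

lemma measurable_rpow_const' (c : ℝ) : Measurable fun x : ℝ => x ^ c := by
  have h : (fun x : ℝ => x ^ c) = fun x =>
      if 0 < x then Real.exp (Real.log x * c)
      else if x = 0 then (0:ℝ) ^ c
      else Real.exp (Real.log x * c) * Real.cos (c * Real.pi) := by
    funext x
    split_ifs with h1 h2
    · exact Real.rpow_def_of_pos h1 c
    · rw [h2]
    · exact Real.rpow_def_of_neg (lt_of_le_of_ne (not_lt.1 h1) h2) c
  rw [h]
  refine Measurable.ite (measurableSet_lt measurable_const measurable_id)
    ((Real.measurable_log.mul measurable_const).exp) ?_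
  exact Measurable.ite (measurableSet_eq_fun measurable_id measurable_const) measurable_const
    (((Real.measurable_log.mul measurable_const).exp).mul measurable_const)

lemma w_integrable (p : ℝ) (hp : 1 < p) :
    IntervalIntegrable (fun z : ℝ => (1 - z) ^ (-(1/p))) volume 0 1 := by
  have h : (-1 : ℝ) < -(1/p) := by
    have : 1/p < 1 := by rw [div_lt_one (by linarith)]; linarith
    linarith
  have := ((intervalIntegral.intervalIntegrable_rpow' (a := 0) (b := 1) h).comp_sub_left 1).symm
  simpa using this

set_option maxHeartbeats 1000000 in
theorem E1_hasDerivAt (p q : ℝ) (hp : 1 < p) (hq : q ∈ Set.Ioo (0:ℝ) 1) :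
    HasDerivAt (E1 p) ((E1 p q - K1 p q) / q) q := by
  obtain ⟨hq0, hq1⟩ := hq
  set r : ℝ := (1 + q) / 2 with hr
  have hr1 : r < 1 := by rw [hr]; linarith
  have hr0 : 0 < r := by rw [hr]; linarith
  have hrr : r ^ 2 < 1 := by nlinarith
  set ε : ℝ := (1 - q) / 2 with hε
  have hε0 : 0 < ε := by rw [hε]; linarith
  have hball : ∀ x ∈ Metric.ball q ε, |x| < r := by
    intro x hx
    rw [Metric.mem_ball, Real.dist_eq, abs_lt] at hx
    rw [abs_lt]
    constructor
    · nlinarith [hx.1]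
    · nlinarith [hx.2]
  have hpos : ∀ x ∈ Metric.ball q ε, ∀ z ∈ Set.Ioc (0:ℝ) 1, 1 - r^2 ≤ 1 - x^2 * z^2 := by
    intro x hx z hz
    have h1 := hball x hx
    have h2 : x^2 < r^2 := by nlinarith [abs_nonneg x, sq_abs x]
    have h3 : z^2 ≤ 1 := by nlinarith [hz.1, hz.2]
    nlinarith [sq_nonneg x, sq_nonneg z]
  have hqball : q ∈ Metric.ball q ε := Metric.mem_ball_self hε0
  -- measurability helpers
  have measF : ∀ x : ℝ, AEStronglyMeasurable
      (fun z : ℝ => (1 - x ^ 2 * z ^ 2) ^ ((1/2) : ℝ) * (1 - z ^ 2) ^ (-(1 / p)))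
      (volume.restrict (Set.uIoc (0:ℝ) 1)) := by
    intro x
    apply Measurable.aestronglyMeasurable
    exact (((measurable_rpow_const' _).comp
      (measurable_const.sub ((measurable_id.pow_const 2).const_mul _))).mul
      ((measurable_rpow_const' _).comp (measurable_const.sub (measurable_id.pow_const 2))))
  have measF' : ∀ x : ℝ, AEStronglyMeasurable
      (fun z : ℝ => (-(x * z ^ 2) * (1 - x ^ 2 * z ^ 2) ^ (-(1/2) : ℝ)) * (1 - z ^ 2) ^ (-(1 / p)))
      (volume.restrict (Set.uIoc (0:ℝ) 1)) := by
    intro x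
    apply Measurable.aestronglyMeasurable
    exact (((((measurable_id.pow_const 2).const_mul _).neg.mul ((measurable_rpow_const' _).comp
      (measurable_const.sub ((measurable_id.pow_const 2).const_mul _)))).mul
      ((measurable_rpow_const' _).comp (measurable_const.sub (measurable_id.pow_const 2)))))
  have measK : AEStronglyMeasurable
      (fun z : ℝ => (1 - q ^ 2 * z ^ 2) ^ (-(1/2) : ℝ) * (1 - z ^ 2) ^ (-(1 / p)))
      (volume.restrict (Set.uIoc (0:ℝ) 1)) := by
    apply Measurable.aestronglyMeasurable
    exact (((measurable_rpow_const' _).comp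
      (measurable_const.sub ((measurable_id.pow_const 2).const_mul _))).mul
      ((measurable_rpow_const' _).comp (measurable_const.sub (measurable_id.pow_const 2))))
  -- pointwise bound on w
  have hw_le : ∀ z ∈ Set.Ioc (0:ℝ) 1, (1 - z^2) ^ (-(1/p)) ≤ (1 - z) ^ (-(1/p)) := by
    intro z hz
    rcases eq_or_lt_of_le hz.2 with h1 | h1
    · rw [h1]; norm_num
    · have h2 : 0 < 1 - z := by linarith
      have h3 : 1 - z ≤ 1 - z^2 := by nlinarith [hz.1]
      exact Real.rpow_le_rpow_of_nonpos h2 h3 (neg_nonpos.mpr (by positivity))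
  have hw_nonneg : ∀ z ∈ Set.Ioc (0:ℝ) 1, 0 ≤ (1 - z^2) ^ (-(1/p)) := by
    intro z hz
    apply Real.rpow_nonneg
    nlinarith [hz.1, hz.2]
  have hIoc : Set.uIoc (0:ℝ) 1 = Set.Ioc (0:ℝ) 1 := Set.uIoc_of_le zero_le_one
  have hwInt := w_integrable p hp
  have bound_int : IntervalIntegrable
      (fun z : ℝ => (1 - r^2) ^ (-(1/2):ℝ) * (1 - z) ^ (-(1/p))) volume 0 1 :=
    hwInt.const_mul _
  -- integrability of K1 integrand
  have hK_int : IntervalIntegrable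
      (fun z : ℝ => (1 - q ^ 2 * z ^ 2) ^ (-(1/2) : ℝ) * (1 - z ^ 2) ^ (-(1 / p)))
      volume 0 1 := by
    apply bound_int.mono_fun measK
    filter_upwards [MeasureTheory.ae_restrict_mem measurableSet_uIoc] with z hz
    rw [hIoc] at hz
    have h1 := hpos q hqball z hz
    have h2 : 0 < 1 - q^2 * z^2 := by linarith [hrr]
    have h3 : (1 - q ^ 2 * z ^ 2) ^ (-(1/2):ℝ) ≤ (1 - r^2) ^ (-(1/2):ℝ) :=
      Real.rpow_le_rpow_of_nonpos (by linarith) h1 (by norm_num)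
    have h4 := hw_le z hz
    have h5 := hw_nonneg z hz
    have h6 : (0:ℝ) ≤ (1 - q ^ 2 * z ^ 2) ^ (-(1/2):ℝ) := Real.rpow_nonneg h2.le _
    simp only [norm_mul, Real.norm_eq_abs, abs_of_nonneg h6, abs_of_nonneg h5,
      abs_of_nonneg (Real.rpow_nonneg (by linarith : (0:ℝ) ≤ 1 - r^2) (-(1/2):ℝ)),
      abs_of_nonneg (le_trans h5 h4)]
    exact mul_le_mul h3 h4 h5 (Real.rpow_nonneg (by linarith) _)
  -- integrability of E1 integrand at q
  have hF_int : IntervalIntegrable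
      (fun z : ℝ => (1 - q ^ 2 * z ^ 2) ^ ((1/2) : ℝ) * (1 - z ^ 2) ^ (-(1 / p)))
      volume 0 1 := by
    apply hwInt.mono_fun (measF q)
    filter_upwards [MeasureTheory.ae_restrict_mem measurableSet_uIoc] with z hz
    rw [hIoc] at hz
    have h1 := hpos q hqball z hz
    have h2 : 0 < 1 - q^2 * z^2 := by linarith [hrr]
    have hle1 : 1 - q^2 * z^2 ≤ 1 := by nlinarith [sq_nonneg q, sq_nonneg z, hz.1]
    have h3 : (1 - q ^ 2 * z ^ 2) ^ ((1/2):ℝ) ≤ 1 :=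
      Real.rpow_le_one h2.le hle1 (by norm_num)
    have h5 := hw_nonneg z hz
    have h6 : (0:ℝ) ≤ (1 - q ^ 2 * z ^ 2) ^ ((1/2):ℝ) := Real.rpow_nonneg h2.le _
    simp only [norm_mul, Real.norm_eq_abs, abs_of_nonneg h6, abs_of_nonneg h5,
      abs_of_nonneg (le_trans h5 (hw_le z hz))]
    calc (1 - q ^ 2 * z ^ 2) ^ ((1/2):ℝ) * (1 - z^2) ^ (-(1/p))
        ≤ 1 * (1 - z^2) ^ (-(1/p)) := mul_le_mul_of_nonneg_right h3 h5
      _ = (1 - z^2) ^ (-(1/p)) := one_mul _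
      _ ≤ (1 - z) ^ (-(1/p)) := hw_le z hz
  -- main application
  have main := intervalIntegral.hasDerivAt_integral_of_dominated_loc_of_deriv_le
    (μ := volume) (a := (0:ℝ)) (b := 1)
    (F := fun x z => (1 - x ^ 2 * z ^ 2) ^ ((1/2) : ℝ) * (1 - z ^ 2) ^ (-(1 / p)))
    (F' := fun x z => (-(x * z ^ 2) * (1 - x ^ 2 * z ^ 2) ^ (-(1/2) : ℝ)) * (1 - z ^ 2) ^ (-(1 / p)))
    (x₀ := q) (bound := fun z => (1 - r^2) ^ (-(1/2):ℝ) * (1 - z) ^ (-(1/p)))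
    (Metric.ball_mem_nhds q hε0) (Filter.Eventually.of_forall measF) hF_int (measF' q) ?_ bound_int ?_
  · -- conclude
    obtain ⟨-, hderiv⟩ := main
    have hE : (fun x => ∫ z in (0:ℝ)..1,
        (1 - x ^ 2 * z ^ 2) ^ ((1/2) : ℝ) * (1 - z ^ 2) ^ (-(1 / p))) = E1 p := rfl
    rw [hE] at hderiv
    refine hderiv.congr_deriv ?_
    symm
    -- show (E1 p q - K1 p q) / q = ∫ F' q
    have hdiff : E1 p q - K1 p q = ∫ z in (0:ℝ)..1,
        ((1 - q ^ 2 * z ^ 2) ^ ((1/2) : ℝ) * (1 - z ^ 2) ^ (-(1 / p)) -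
         (1 - q ^ 2 * z ^ 2) ^ (-(1/2) : ℝ) * (1 - z ^ 2) ^ (-(1 / p))) := by
      rw [E1, K1, intervalIntegral.integral_sub hF_int hK_int]
    have hptwise : ∀ z ∈ Set.uIcc (0:ℝ) 1,
        (1 - q ^ 2 * z ^ 2) ^ ((1/2) : ℝ) * (1 - z ^ 2) ^ (-(1 / p)) -
         (1 - q ^ 2 * z ^ 2) ^ (-(1/2) : ℝ) * (1 - z ^ 2) ^ (-(1 / p)) =
        q * ((-(q * z ^ 2) * (1 - q ^ 2 * z ^ 2) ^ (-(1/2) : ℝ)) * (1 - z ^ 2) ^ (-(1 / p))) := by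
      intro z hz
      rw [Set.uIcc_of_le zero_le_one] at hz
      have hz2 : z^2 ≤ 1 := by nlinarith [hz.1, hz.2]
      have h2 : 0 < 1 - q^2 * z^2 := by nlinarith [sq_nonneg z]
      have key : (1 - q ^ 2 * z ^ 2) ^ ((1/2) : ℝ) =
          (1 - q ^ 2 * z ^ 2) * (1 - q ^ 2 * z ^ 2) ^ (-(1/2) : ℝ) := by
        rw [← Real.rpow_one_add' h2.le (by norm_num : (1:ℝ) + -(1/2) ≠ 0)]
        norm_num
      rw [key]; ring
    have : E1 p q - K1 p q = q * ∫ z in (0:ℝ)..1,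
        (-(q * z ^ 2) * (1 - q ^ 2 * z ^ 2) ^ (-(1/2) : ℝ)) * (1 - z ^ 2) ^ (-(1 / p)) := by
      rw [hdiff, ← intervalIntegral.integral_const_mul]
      exact intervalIntegral.integral_congr hptwise
    rw [this, mul_comm, mul_div_assoc, div_self hq0.ne', mul_one]
  · -- bound
    filter_upwards with z hz x hx
    rw [hIoc] at hz
    have h1 := hpos x hx z hz
    have h2 : 0 < 1 - x^2 * z^2 := by linarith [hrr]
    have h3 : (1 - x ^ 2 * z ^ 2) ^ (-(1/2):ℝ) ≤ (1 - r^2) ^ (-(1/2):ℝ) :=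
      Real.rpow_le_rpow_of_nonpos (by linarith) h1 (by norm_num)
    have h5 := hw_nonneg z hz
    have h6 : (0:ℝ) ≤ (1 - x ^ 2 * z ^ 2) ^ (-(1/2):ℝ) := Real.rpow_nonneg h2.le _
    have hxz : |(-(x * z ^ 2))| ≤ 1 := by
      rw [abs_neg, abs_mul]
      have := (hball x hx).le
      have hz2 : |z^2| ≤ 1 := by rw [abs_of_nonneg (sq_nonneg z)]; nlinarith [hz.1, hz.2]
      calc |x| * |z^2| ≤ 1 * 1 := mul_le_mul (by linarith) hz2 (abs_nonneg _) zero_le_one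
        _ = 1 := by norm_num
    simp only [norm_mul, Real.norm_eq_abs, abs_of_nonneg h6, abs_of_nonneg h5]
    calc |(-(x * z ^ 2))| * (1 - x ^ 2 * z ^ 2) ^ (-(1/2):ℝ) * (1 - z^2) ^ (-(1/p))
        ≤ 1 * ((1 - r^2) ^ (-(1/2):ℝ)) * ((1 - z) ^ (-(1/p))) := by
          exact mul_le_mul (mul_le_mul hxz h3 h6 zero_le_one) (hw_le z hz) h5
            (mul_nonneg zero_le_one (Real.rpow_nonneg (by linarith) _))
      _ = (1 - r^2) ^ (-(1/2):ℝ) * (1 - z) ^ (-(1/p)) := by ring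
  · -- differentiability
    filter_upwards with z hz x hx
    rw [hIoc] at hz
    have h1 := hpos x hx z hz
    have h2 : 0 < 1 - x^2 * z^2 := by linarith [hrr]
    have hinner : HasDerivAt (fun x : ℝ => 1 - x ^ 2 * z ^ 2) (-(2 * x * z^2)) x := by
      have : HasDerivAt (fun x : ℝ => x ^ 2 * z ^ 2) (2 * x * z^2) x := by
        simpa [mul_comm] using ((hasDerivAt_pow 2 x).mul_const (z^2))
      exact ((hasDerivAt_const x (1:ℝ)).sub this).congr_deriv (by ring)
    have houter := hinner.rpow_const (p := (1/2:ℝ)) (Or.inl h2.ne')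
    have := houter.mul_const ((1 - z ^ 2) ^ (-(1 / p)))
    refine this.congr_deriv ?_
    rw [show (1/2 : ℝ) - 1 = -(1/2) by norm_num]
    ring
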